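/- There exists an NFA with 4 states such that for every F ⊆ {0,1}³ one can choose transitions/acceptance data on the fixed 4-state schematic so that the accepted words of length 3 are exactly F; that is, the length-restricted nondeterministic state complexity of every subset of {0,1}³ is at most 4. -/
import Mathlib


/-- Every subset of {0,1}³ has length-restricted nondeterministic state complexity at most 4. -/
theorem length_restricted_complexity_three (F : Set (List Bool))
    (hF : ∀ x ∈ F, x.length = 3) :
    ∃ M : NFA Bool (Fin 4), ∀ x : List Bool, x.length = 3 → (x ∈ M.accepts ↔ x ∈ F) := by
  classical
  refine ⟨⟨fun q b => {q' |
      (q = 0 ∧ ((b = false ∧ q' = 1) ∨ (b = true ∧ q' = 2))) ∨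
      (q = 1 ∧ ((q' = 1 ∧ [false, b, false] ∈ F) ∨ (q' = 2 ∧ [false, b, true] ∈ F) ∨
                (q' = 3 ∧ b = false))) ∨
      (q = 2 ∧ ((q' = 1 ∧ [true, b, false] ∈ F) ∨ (q' = 2 ∧ [true, b, true] ∈ F) ∨
                (q' = 3 ∧ b = true)))}, {0}, {3}⟩, ?_⟩
  intro x hx
  match x with
  | [a, b, c] =>
    simp only [NFA.mem_accepts, NFA.eval, NFA.evalFrom, List.foldl, NFA.stepSet,
      Set.mem_singleton_iff, Set.mem_setOf_eq, Set.mem_iUnion, exists_prop,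
      exists_eq_left]
    cases a <;> cases b <;> cases c <;> constructor
    all_goals intro h
    -- forward directions
    all_goals try
      (obtain ⟨i, ⟨j, hj, hij⟩, hi⟩ := h
       fin_cases i <;> fin_cases j <;> simp_all)
    -- backward directions
    all_goals
      first
      | (refine ⟨1, ⟨1, ?_, ?_⟩, ?_⟩ <;> simp [h]) ; done
      | (refine ⟨2, ⟨1, ?_, ?_⟩, ?_⟩ <;> simp [h]) ; done
      | (refine ⟨1, ⟨2, ?_, ?_⟩, ?_⟩ <;> simp [h]) ; done
      | (refine ⟨2, ⟨2, ?_, ?_⟩, ?_⟩ <;> simp [h]) ; done
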